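/- If G is a triangle-free finite simple graph on n vertices, then for every x, σ(Ḡ, −x²) = (−x)^n · m(G, x), where Ḡ is the complement of G and m(G, x) is the matching polynomial of G. -/

import Mathlib

open Finset

/-- `sigmaCoeff G i` is the number of `i`-colour partitions of `G`, i.e. the number of
partitions of the vertex set of `G` into `i` nonempty independent sets. -/
noncomputable def sigmaCoeff {V : Type} [Fintype V] [DecidableEq V]
    (G : SimpleGraph V) (i : ℕ) : ℕ :=
  Nat.card {F : Finset (Finset V) // F.card = i ∧
    (∀ p ∈ F, p.Nonempty) ∧
    (∀ p ∈ F, ∀ q ∈ F, p ≠ q → Disjoint p q) ∧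
    F.sup id = Finset.univ ∧
    (∀ p ∈ F, ∀ u ∈ p, ∀ v ∈ p, ¬ G.Adj u v)}

/-- The σ-polynomial of `G`, evaluated at `x` : `σ(G,x) = Σ_{i=0}^{n} a_i(G) x^i`. -/
noncomputable def sigmaPoly {V : Type} [Fintype V] [DecidableEq V]
    (G : SimpleGraph V) (x : ℝ) : ℝ :=
  ∑ i ∈ Finset.range (Fintype.card V + 1), (sigmaCoeff G i : ℝ) * x ^ i

/-- `matchCount G i` is the number of matchings of size `i` in `G`, i.e. the number of
sets of `i` pairwise disjoint edges of `G`. -/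
noncomputable def matchCount {V : Type} [Fintype V] [DecidableEq V]
    (G : SimpleGraph V) (i : ℕ) : ℕ :=
  Nat.card {M : Finset (Sym2 V) // M.card = i ∧
    (∀ e ∈ M, e ∈ G.edgeSet) ∧
    (∀ e ∈ M, ∀ f ∈ M, e ≠ f → ∀ v : V, v ∈ e → v ∉ f)}

/-- The matching polynomial of `G`, evaluated at `x` :
`m(G,x) = Σ_{i ≥ 0} (−1)^i m_i(G) x^{n−2i}`. -/
noncomputable def matchPoly {V : Type} [Fintype V] [DecidableEq V]
    (G : SimpleGraph V) (x : ℝ) : ℝ :=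
  ∑ i ∈ Finset.range (Fintype.card V / 2 + 1),
    (-1 : ℝ) ^ i * (matchCount G i : ℝ) * x ^ (Fintype.card V - 2 * i)

section Helpers

variable {V : Type} [DecidableEq V]

def pairFinset (e : Sym2 V) : Finset V :=
  Sym2.lift ⟨fun a b => {a, b}, fun a b => Finset.pair_comm a b⟩ e

@[simp] lemma pairFinset_mk (a b : V) : pairFinset s(a, b) = {a, b} := rfl

@[simp] lemma mem_pairFinset {v : V} {e : Sym2 V} : v ∈ pairFinset e ↔ v ∈ e := by
  induction e using Sym2.ind with
  | _ a b => simp [Sym2.mem_iff]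

lemma card_pairFinset {G : SimpleGraph V} {e : Sym2 V} (he : e ∈ G.edgeSet) :
    (pairFinset e).card = 2 := by
  induction e using Sym2.ind with
  | _ a b =>
    rw [SimpleGraph.mem_edgeSet] at he
    simp [Finset.card_pair he.ne]

lemma pairFinset_inj {G : SimpleGraph V} {e f : Sym2 V} (he : e ∈ G.edgeSet)
    (hf : f ∈ G.edgeSet) (h : pairFinset e = pairFinset f) : e = f := by
  induction e using Sym2.ind with
  | _ a b =>
    induction f using Sym2.ind with
    | _ c d =>
      rw [SimpleGraph.mem_edgeSet] at he hf
      simp only [pairFinset_mk] at h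
      have ha : a ∈ ({c, d} : Finset V) := by rw [← h]; simp
      have hb : b ∈ ({c, d} : Finset V) := by rw [← h]; simp
      simp only [Finset.mem_insert, Finset.mem_singleton] at ha hb
      rw [Sym2.eq_iff]
      rcases ha with rfl | rfl <;> rcases hb with rfl | rfl <;>
        first | tauto | exact absurd he (G.irrefl)

lemma adj_of_mem_pair {G : SimpleGraph V} {e : Sym2 V} (he : e ∈ G.edgeSet)
    {u v : V} (hu : u ∈ e) (hv : v ∈ e) (huv : u ≠ v) : G.Adj u v := by
  induction e using Sym2.ind with
  | _ a b =>
    rw [SimpleGraph.mem_edgeSet] at he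
    rw [Sym2.mem_iff] at hu hv
    rcases hu with rfl | rfl <;> rcases hv with rfl | rfl <;>
      first | exact absurd rfl huv | exact he | exact he.symm

section Fin
variable [Fintype V]

lemma matching_cover_card {G : SimpleGraph V} {M : Finset (Sym2 V)}
    (hE : ∀ e ∈ M, e ∈ G.edgeSet)
    (hD : ∀ e ∈ M, ∀ f ∈ M, e ≠ f → ∀ v : V, v ∈ e → v ∉ f) :
    (M.biUnion pairFinset).card = 2 * M.card := by
  rw [Finset.card_biUnion, Finset.sum_congr rfl (fun e he => card_pairFinset (hE e he)),
    Finset.sum_const, smul_eq_mul, mul_comm]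
  intro e he f hf hef
  rw [Function.onFun, Finset.disjoint_left]
  intro v hv hv'
  exact hD e he f hf hef v (mem_pairFinset.mp hv) (mem_pairFinset.mp hv')

lemma two_mul_card_le {G : SimpleGraph V} {M : Finset (Sym2 V)}
    (hE : ∀ e ∈ M, e ∈ G.edgeSet)
    (hD : ∀ e ∈ M, ∀ f ∈ M, e ≠ f → ∀ v : V, v ∈ e → v ∉ f) :
    2 * M.card ≤ Fintype.card V := by
  rw [← matching_cover_card hE hD]
  exact Finset.card_le_univ _

lemma matchCount_eq_zero (G : SimpleGraph V) {j : ℕ} (h : Fintype.card V < 2 * j) :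
    matchCount G j = 0 := by
  unfold matchCount
  rw [Nat.card_eq_zero]
  left
  constructor
  rintro ⟨M, hc, hE, hD⟩
  have := two_mul_card_le hE hD
  omega

/-- The partition of the vertex set associated with a matching. -/
def partnOf (M : Finset (Sym2 V)) : Finset (Finset V) :=
  M.image pairFinset ∪
    (Finset.univ \ M.biUnion pairFinset).image (fun v => ({v} : Finset V))

lemma partnOf_props {G : SimpleGraph V} {M : Finset (Sym2 V)}
    (hE : ∀ e ∈ M, e ∈ G.edgeSet)
    (hD : ∀ e ∈ M, ∀ f ∈ M, e ≠ f → ∀ v : V, v ∈ e → v ∉ f) :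
    (partnOf M).card = Fintype.card V - M.card ∧
    (∀ p ∈ partnOf M, p.Nonempty) ∧
    (∀ p ∈ partnOf M, ∀ q ∈ partnOf M, p ≠ q → Disjoint p q) ∧
    (partnOf M).sup id = Finset.univ ∧
    (∀ p ∈ partnOf M, ∀ u ∈ p, ∀ v ∈ p, ¬ Gᶜ.Adj u v) := by
  classical
  set C := M.biUnion pairFinset with hC
  have hcard2 : ∀ p ∈ M.image pairFinset, p.card = 2 := by
    intro p hp
    obtain ⟨e, he, rfl⟩ := Finset.mem_image.mp hp
    exact card_pairFinset (hE e he)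
  have hcard1 : ∀ p ∈ (Finset.univ \ C).image (fun v => ({v} : Finset V)), p.card = 1 := by
    intro p hp
    obtain ⟨v, _, rfl⟩ := Finset.mem_image.mp hp
    simp
  have hAB : Disjoint (M.image pairFinset)
      ((Finset.univ \ C).image (fun v => ({v} : Finset V))) := by
    rw [Finset.disjoint_left]
    intro p hp hp'
    have := hcard2 p hp
    have := hcard1 p hp'
    omega
  refine ⟨?_, ?_, ?_, ?_, ?_⟩
  · rw [partnOf, Finset.card_union_of_disjoint hAB]
    have h1 : (M.image pairFinset).card = M.card := by
      apply Finset.card_image_of_injOn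
      intro e he f hf h
      exact pairFinset_inj (hE e he) (hE f hf) h
    have h2 : ((Finset.univ \ C).image (fun v => ({v} : Finset V))).card
        = Fintype.card V - C.card := by
      rw [Finset.card_image_of_injective _ (fun a b h => by
        simpa using Finset.singleton_injective h),
        Finset.card_sdiff_of_subset (Finset.subset_univ _), Finset.card_univ]
    have h3 : C.card = 2 * M.card := matching_cover_card hE hD
    have h4 : 2 * M.card ≤ Fintype.card V := two_mul_card_le hE hD
    omega
  · intro p hp
    rcases Finset.mem_union.mp hp with hp | hp
    · rw [← Finset.card_pos, hcard2 p hp]; omega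
    · rw [← Finset.card_pos, hcard1 p hp]; omega
  · intro p hp q hq hpq
    rcases Finset.mem_union.mp hp with hp | hp <;>
      rcases Finset.mem_union.mp hq with hq | hq
    · obtain ⟨e, he, rfl⟩ := Finset.mem_image.mp hp
      obtain ⟨f, hf, rfl⟩ := Finset.mem_image.mp hq
      have hef : e ≠ f := fun h => hpq (by rw [h])
      rw [Finset.disjoint_left]
      intro v hv hv'
      exact hD e he f hf hef v (mem_pairFinset.mp hv) (mem_pairFinset.mp hv')
    · obtain ⟨e, he, rfl⟩ := Finset.mem_image.mp hp
      obtain ⟨v, hv, rfl⟩ := Finset.mem_image.mp hq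
      have hv' : v ∉ C := (Finset.mem_sdiff.mp hv).2
      rw [Finset.disjoint_right]
      intro u hu hu'
      rw [Finset.mem_singleton] at hu
      subst hu
      exact hv' (Finset.mem_biUnion.mpr ⟨e, he, hu'⟩)
    · obtain ⟨v, hv, rfl⟩ := Finset.mem_image.mp hp
      obtain ⟨e, he, rfl⟩ := Finset.mem_image.mp hq
      have hv' : v ∉ C := (Finset.mem_sdiff.mp hv).2
      rw [Finset.disjoint_left]
      intro u hu hu'
      rw [Finset.mem_singleton] at hu
      subst hu
      exact hv' (Finset.mem_biUnion.mpr ⟨e, he, hu'⟩)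
    · obtain ⟨v, _, rfl⟩ := Finset.mem_image.mp hp
      obtain ⟨w, _, rfl⟩ := Finset.mem_image.mp hq
      have : v ≠ w := fun h => hpq (by rw [h])
      exact Finset.disjoint_singleton.mpr this
  · apply Finset.eq_univ_of_forall
    intro v
    rw [Finset.sup_eq_biUnion, Finset.mem_biUnion]
    by_cases hv : v ∈ C
    · obtain ⟨e, he, hve⟩ := Finset.mem_biUnion.mp hv
      exact ⟨pairFinset e, Finset.mem_union_left _ (Finset.mem_image_of_mem _ he), hve⟩
    · refine ⟨{v}, Finset.mem_union_right _ ?_, Finset.mem_singleton_self v⟩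
      exact Finset.mem_image_of_mem _ (Finset.mem_sdiff.mpr ⟨Finset.mem_univ v, hv⟩)
  · intro p hp u hu v hv
    rw [SimpleGraph.compl_adj]
    rintro ⟨huv, hnadj⟩
    rcases Finset.mem_union.mp hp with hp | hp
    · obtain ⟨e, he, rfl⟩ := Finset.mem_image.mp hp
      exact hnadj (adj_of_mem_pair (hE e he) (mem_pairFinset.mp hu) (mem_pairFinset.mp hv) huv)
    · obtain ⟨w, _, rfl⟩ := Finset.mem_image.mp hp
      rw [Finset.mem_singleton] at hu hv
      exact huv (hu.trans hv.symm)

lemma partnOf_subset {G : SimpleGraph V} {M1 M2 : Finset (Sym2 V)}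
    (hE1 : ∀ e ∈ M1, e ∈ G.edgeSet) (hE2 : ∀ e ∈ M2, e ∈ G.edgeSet)
    (h : partnOf M1 = partnOf M2) : M1 ⊆ M2 := by
  intro e he
  have h1 : pairFinset e ∈ partnOf M2 := by
    rw [← h]
    exact Finset.mem_union_left _ (Finset.mem_image_of_mem _ he)
  rcases Finset.mem_union.mp h1 with h2 | h2
  · obtain ⟨f, hf, hef⟩ := Finset.mem_image.mp h2
    rwa [pairFinset_inj (hE2 f hf) (hE1 e he) hef] at hf
  · obtain ⟨v, _, hv⟩ := Finset.mem_image.mp h2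
    have := card_pairFinset (hE1 e he)
    rw [← hv] at this
    simp at this

end Fin
end Helpers

/-- The key combinatorial count: for triangle-free `G`, the `i`-colour partitions of the
complement of `G` are in bijection with the matchings of size `n - i` in `G`. -/
lemma sigmaCoeff_compl_eq {V : Type} [Fintype V] [DecidableEq V]
    (G : SimpleGraph V) (hG : G.CliqueFree 3) {i : ℕ} (hi : i ≤ Fintype.card V) :
    sigmaCoeff Gᶜ i = matchCount G (Fintype.card V - i) := by
  classical
  set n := Fintype.card V with hn
  rw [sigmaCoeff, matchCount]
  refine (Nat.card_congr (Equiv.ofBijective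
    (fun M : {M : Finset (Sym2 V) // M.card = n - i ∧
        (∀ e ∈ M, e ∈ G.edgeSet) ∧
        (∀ e ∈ M, ∀ f ∈ M, e ≠ f → ∀ v : V, v ∈ e → v ∉ f)} =>
      (⟨partnOf M.1, by
        obtain ⟨M, hc, hE, hD⟩ := M
        obtain ⟨h1, h2, h3, h4, h5⟩ := partnOf_props hE hD
        have := two_mul_card_le hE hD
        exact ⟨by rw [h1]; omega, h2, h3, h4, h5⟩⟩ :
      {F : Finset (Finset V) // F.card = i ∧
        (∀ p ∈ F, p.Nonempty) ∧
        (∀ p ∈ F, ∀ q ∈ F, p ≠ q → Disjoint p q) ∧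
        F.sup id = Finset.univ ∧
        (∀ p ∈ F, ∀ u ∈ p, ∀ v ∈ p, ¬ Gᶜ.Adj u v)})) ⟨?_, ?_⟩)).symm
  · -- injectivity
    rintro ⟨M1, hc1, hE1, hD1⟩ ⟨M2, hc2, hE2, hD2⟩ h
    have h' : partnOf M1 = partnOf M2 := congrArg Subtype.val h
    exact Subtype.ext (Finset.Subset.antisymm
      (partnOf_subset hE1 hE2 h') (partnOf_subset hE2 hE1 h'.symm))
  · -- surjectivity
    rintro ⟨F, hFc, hFne, hFd, hFs, hFi⟩
    -- each part has card 1 or 2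
    have hsize : ∀ p ∈ F, p.card = 1 ∨ p.card = 2 := by
      intro p hp
      have hpos : 0 < p.card := Finset.card_pos.mpr (hFne p hp)
      have hle : ¬ 2 < p.card := by
        intro h2
        obtain ⟨a, b, c, ha, hb, hc, hab, hac, hbc⟩ := Finset.two_lt_card_iff.mp h2
        have hadj : ∀ u ∈ p, ∀ v ∈ p, u ≠ v → G.Adj u v := by
          intro u hu v hv huv
          have := hFi p hp u hu v hv
          rw [SimpleGraph.compl_adj] at this
          push_neg at this
          exact this huv
        exact hG {a, b, c} (SimpleGraph.is3Clique_iff.mpr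
          ⟨a, b, c, hadj a ha b hb hab, hadj a ha c hc hac, hadj b hb c hc hbc, rfl⟩)
      omega
    have hadjF : ∀ p ∈ F, ∀ u ∈ p, ∀ v ∈ p, u ≠ v → G.Adj u v := by
      intro p hp u hu v hv huv
      have := hFi p hp u hu v hv
      rw [SimpleGraph.compl_adj] at this
      push_neg at this
      exact this huv
    set M : Finset (Sym2 V) := G.edgeFinset.filter (fun e => pairFinset e ∈ F) with hM
    have hE : ∀ e ∈ M, e ∈ G.edgeSet := by
      intro e he
      exact SimpleGraph.mem_edgeFinset.mp (Finset.mem_filter.mp he).1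
    have hMF : ∀ e ∈ M, pairFinset e ∈ F := fun e he => (Finset.mem_filter.mp he).2
    have hD : ∀ e ∈ M, ∀ f ∈ M, e ≠ f → ∀ v : V, v ∈ e → v ∉ f := by
      intro e he f hf hef v hv hv'
      have hne : pairFinset e ≠ pairFinset f := fun h =>
        hef (pairFinset_inj (hE e he) (hE f hf) h)
      have := hFd _ (hMF e he) _ (hMF f hf) hne
      exact Finset.disjoint_left.mp this (mem_pairFinset.mpr hv) (mem_pairFinset.mpr hv')
    -- A-characterization
    have hA : M.image pairFinset = F.filter (fun p => p.card = 2) := by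
      apply Finset.Subset.antisymm
      · intro p hp
        obtain ⟨e, he, rfl⟩ := Finset.mem_image.mp hp
        exact Finset.mem_filter.mpr ⟨hMF e he, card_pairFinset (hE e he)⟩
      · intro p hp
        obtain ⟨hpF, hp2⟩ := Finset.mem_filter.mp hp
        obtain ⟨a, b, hab, rfl⟩ := Finset.card_eq_two.mp hp2
        have hadj : G.Adj a b := hadjF _ hpF a (by simp) b (by simp) hab
        refine Finset.mem_image.mpr ⟨s(a, b), ?_, rfl⟩
        exact Finset.mem_filter.mpr ⟨SimpleGraph.mem_edgeFinset.mpr hadj, by simpa using hpF⟩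
    -- B-characterization
    have hB : (Finset.univ \ M.biUnion pairFinset).image (fun v => ({v} : Finset V))
        = F.filter (fun p => p.card = 1) := by
      apply Finset.Subset.antisymm
      · intro p hp
        obtain ⟨v, hv, rfl⟩ := Finset.mem_image.mp hp
        have hvC : v ∉ M.biUnion pairFinset := (Finset.mem_sdiff.mp hv).2
        -- v lies in some part
        have hvU : v ∈ F.sup id := by rw [hFs]; exact Finset.mem_univ v
        rw [Finset.sup_eq_biUnion, Finset.mem_biUnion] at hvU
        obtain ⟨p, hpF, hvp⟩ := hvU
        rcases hsize p hpF with h1 | h2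
        · obtain ⟨w, rfl⟩ := Finset.card_eq_one.mp h1
          simp only [id_eq, Finset.mem_singleton] at hvp
          subst hvp
          exact Finset.mem_filter.mpr ⟨hpF, h1⟩
        · exfalso
          have : p ∈ M.image pairFinset := by
            rw [hA]; exact Finset.mem_filter.mpr ⟨hpF, h2⟩
          obtain ⟨e, he, rfl⟩ := Finset.mem_image.mp this
          exact hvC (Finset.mem_biUnion.mpr ⟨e, he, hvp⟩)
      · intro p hp
        obtain ⟨hpF, hp1⟩ := Finset.mem_filter.mp hp
        obtain ⟨v, rfl⟩ := Finset.card_eq_one.mp hp1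
        refine Finset.mem_image.mpr ⟨v, Finset.mem_sdiff.mpr ⟨Finset.mem_univ v, ?_⟩, rfl⟩
        intro hvC
        obtain ⟨e, he, hve⟩ := Finset.mem_biUnion.mp hvC
        have hq : pairFinset e ∈ F := hMF e he
        have hq2 : (pairFinset e).card = 2 := card_pairFinset (hE e he)
        have hne : ({v} : Finset V) ≠ pairFinset e := by
          intro h; rw [← h] at hq2; simp at hq2
        exact Finset.disjoint_left.mp (hFd _ hpF _ hq hne)
          (Finset.mem_singleton_self v) hve
    have hPF : partnOf M = F := by
      rw [partnOf, hA, hB, ← Finset.filter_or]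
      apply Finset.filter_true_of_mem
      intro p hp
      rcases hsize p hp with h | h
      · right; exact h
      · left; exact h
    obtain ⟨h1, _, _, _, _⟩ := partnOf_props hE hD
    have h2 : 2 * M.card ≤ n := two_mul_card_le hE hD
    have hMc : M.card = n - i := by
      rw [hPF] at h1
      omega
    exact ⟨⟨M, hMc, hE, hD⟩, Subtype.ext hPF⟩

theorem sigma_compl_eq_matchPoly {V : Type} [Fintype V] [DecidableEq V]
    (G : SimpleGraph V) (hG : G.CliqueFree 3) (x : ℝ) :
    sigmaPoly Gᶜ (-(x ^ 2)) = (-x) ^ (Fintype.card V) * matchPoly G x := by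
  classical
  set n := Fintype.card V with hn
  rw [sigmaPoly, matchPoly, ← hn]
  have step1 : ∑ i ∈ Finset.range (n + 1), (sigmaCoeff Gᶜ i : ℝ) * (-(x ^ 2)) ^ i
      = ∑ i ∈ Finset.range (n + 1), (matchCount G (n - i) : ℝ) * (-(x ^ 2)) ^ i := by
    refine Finset.sum_congr rfl fun i hi => ?_
    rw [Finset.mem_range] at hi
    rw [sigmaCoeff_compl_eq G hG (by omega : i ≤ n)]
  rw [step1]
  have step2 : ∑ i ∈ Finset.range (n + 1), (matchCount G (n - i) : ℝ) * (-(x ^ 2)) ^ i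
      = ∑ j ∈ Finset.range (n + 1), (matchCount G (n - (n - j)) : ℝ) * (-(x ^ 2)) ^ (n - j) := by
    have := Finset.sum_range_reflect
      (fun j => (matchCount G (n - (n - j)) : ℝ) * (-(x ^ 2)) ^ (n - j)) (n + 1)
    rw [← this]
    refine Finset.sum_congr rfl fun i hi => ?_
    rw [Finset.mem_range] at hi
    have e1 : n + 1 - 1 - i = n - i := by omega
    have e2 : n - (n - (n - i)) = n - i := by omega
    rw [e1, e2]
    congr 2
    omega
  rw [step2]
  have step3 : ∑ j ∈ Finset.range (n + 1), (matchCount G (n - (n - j)) : ℝ) * (-(x ^ 2)) ^ (n - j)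
      = ∑ j ∈ Finset.range (n + 1),
          (-x) ^ n * ((-1 : ℝ) ^ j * (matchCount G j : ℝ) * x ^ (n - 2 * j)) := by
    refine Finset.sum_congr rfl fun j hj => ?_
    rw [Finset.mem_range] at hj
    by_cases h2j : 2 * j ≤ n
    · have e1 : n - (n - j) = j := by omega
      rw [e1]
      have h1 : (-(x ^ 2) : ℝ) ^ (n - j) = (-1) ^ (n - j) * x ^ (2 * (n - j)) := by
        rw [show (-(x ^ 2) : ℝ) = (-1) * x ^ 2 by ring, mul_pow, ← pow_mul]
      have h2 : ((-1 : ℝ)) ^ (n - j) = (-1) ^ n * (-1) ^ j := by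
        rw [← pow_add]
        have e : n + j = (n - j) + 2 * j := by omega
        rw [e, pow_add, pow_mul]
        simp
      have h3 : x ^ (2 * (n - j)) = x ^ n * x ^ (n - 2 * j) := by
        rw [← pow_add]
        congr 1
        omega
      rw [h1, h2, h3, neg_pow]
      ring
    · have hz : matchCount G j = 0 := matchCount_eq_zero G (by omega)
      have hz' : matchCount G (n - (n - j)) = 0 := by
        have : n - (n - j) = j := by omega
        rw [this, hz]
      rw [hz, hz']
      simp
  rw [step3, ← Finset.mul_sum]
  congr 1
  symm
  apply Finset.sum_subset
  · apply Finset.range_subset_range.mpr; omega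
  · intro j hj hj'
    rw [Finset.mem_range] at hj hj'
    have hz : matchCount G j = 0 := matchCount_eq_zero G (by omega)
    rw [hz]
    simp
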